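/- Let β, ϖ > 0 with 2ϖ²β² < 1, set e = sqrt(1 - 2ϖ²β²) and r± = (1 ± e)/(2β). Then r− and r+ are exactly the two roots of r² - r/β + ϖ²/2 = 0, and the integral 2·∫_{r−}^{r+} sqrt(-2 - ϖ²/r² + 2/(β r)) dr equals sqrt(2)·π·(1 - sqrt(1 - e²))/β. -/

import Mathlib

open Real Set


lemma key_integral {a b : ℝ} (ha : 0 < a) (hab : a < b) :
    ∫ x in a..b, Real.sqrt ((b - x) * (x - a)) / x
      = Real.pi * ((a + b) / 2 - Real.sqrt (a * b)) := by
  have hba : (0:ℝ) < b - a := sub_pos.mpr hab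
  have hb : 0 < b := ha.trans hab
  have hab0 : 0 < a * b := mul_pos ha hb
  set F : ℝ → ℝ := fun x =>
    Real.sqrt ((b - x) * (x - a))
      + ((a + b) / 2) * Real.arcsin ((2 * x - (a + b)) / (b - a))
      - Real.sqrt (a * b) * Real.arcsin (((a + b) * x - 2 * (a * b)) / (x * (b - a)))
    with hF
  have hcont : ContinuousOn F (Icc a b) := by
    apply ContinuousOn.sub
    · apply ContinuousOn.add
      · exact (Real.continuous_sqrt.comp (by continuity)).continuousOn
      · exact (continuous_const.mul (Real.continuous_arcsin.comp (by continuity))).continuousOn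
    · apply ContinuousOn.mul continuousOn_const
      apply Real.continuous_arcsin.comp_continuousOn
      apply ContinuousOn.div (by fun_prop) (by fun_prop)
      intro x hx
      have : 0 < x := lt_of_lt_of_le ha hx.1
      positivity
  have hderiv : ∀ x ∈ Ioo a b, HasDerivAt F (Real.sqrt ((b - x) * (x - a)) / x) x := by
    intro x hx
    have hxa : a < x := hx.1
    have hxb : x < b := hx.2
    have hx0 : 0 < x := ha.trans hxa
    have hP : 0 < (b - x) * (x - a) := mul_pos (by linarith) (by linarith)
    have hsP : 0 < Real.sqrt ((b - x) * (x - a)) := Real.sqrt_pos.mpr hP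
    have hsqP : Real.sqrt ((b - x) * (x - a)) ^ 2 = (b - x) * (x - a) := Real.sq_sqrt hP.le
    have hsab : 0 < Real.sqrt (a * b) := Real.sqrt_pos.mpr hab0
    have hsqab : Real.sqrt (a * b) ^ 2 = a * b := Real.sq_sqrt hab0.le
    -- derivative of the sqrt term
    have h1 : HasDerivAt (fun x : ℝ => (b - x) * (x - a)) (a + b - 2 * x) x := by
      have := ((hasDerivAt_id x).const_sub b).mul ((hasDerivAt_id x).sub_const a)
      refine this.congr_deriv (Eq.symm ?_)
      simp only [id_eq]
      ring
    have hC : HasDerivAt (fun x : ℝ => Real.sqrt ((b - x) * (x - a)))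
        ((a + b - 2 * x) / (2 * Real.sqrt ((b - x) * (x - a)))) x := by
      have := (Real.hasDerivAt_sqrt hP.ne').comp x h1
      refine this.congr_deriv (Eq.symm ?_)
      field_simp
    -- first arcsin
    have hg1 : HasDerivAt (fun x : ℝ => (2 * x - (a + b)) / (b - a)) (2 / (b - a)) x := by
      have := (((hasDerivAt_id x).const_mul 2).sub_const (a + b)).div_const (b - a)
      refine this.congr_deriv (Eq.symm ?_)
      ring
    have hg1v : -1 < (2 * x - (a + b)) / (b - a) ∧ (2 * x - (a + b)) / (b - a) < 1 := by
      constructor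
      · rw [lt_div_iff₀ hba]; linarith
      · rw [div_lt_one hba]; linarith
    have hs1 : Real.sqrt (1 - ((2 * x - (a + b)) / (b - a)) ^ 2)
        = 2 * Real.sqrt ((b - x) * (x - a)) / (b - a) := by
      have h1' : 1 - ((2 * x - (a + b)) / (b - a)) ^ 2
          = (2 * Real.sqrt ((b - x) * (x - a)) / (b - a)) ^ 2 := by
        rw [div_pow, div_pow, mul_pow, hsqP]
        field_simp
        ring
      rw [h1', Real.sqrt_sq (by positivity)]
    have hA : HasDerivAt (fun x : ℝ => Real.arcsin ((2 * x - (a + b)) / (b - a)))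
        (1 / Real.sqrt ((b - x) * (x - a))) x := by
      have := (Real.hasDerivAt_arcsin (by linarith [hg1v.1] : (2 * x - (a + b)) / (b - a) ≠ -1)
        (by linarith [hg1v.2] : (2 * x - (a + b)) / (b - a) ≠ 1)).comp x hg1
      refine this.congr_deriv (Eq.symm ?_)
      rw [hs1]
      field_simp
    -- second arcsin
    have hden : x * (b - a) ≠ 0 := by positivity
    have hg2 : HasDerivAt (fun x : ℝ => ((a + b) * x - 2 * (a * b)) / (x * (b - a)))
        (2 * (a * b) / (x ^ 2 * (b - a))) x := by
      have hu : HasDerivAt (fun x : ℝ => (a + b) * x - 2 * (a * b)) (a + b) x := by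
        have := ((hasDerivAt_id x).const_mul (a + b)).sub_const (2 * (a * b))
        refine this.congr_deriv (Eq.symm ?_); ring
      have hv : HasDerivAt (fun x : ℝ => x * (b - a)) (b - a) x := by
        have := (hasDerivAt_id x).mul_const (b - a)
        refine this.congr_deriv (Eq.symm ?_); ring
      have := hu.div hv hden
      refine this.congr_deriv (Eq.symm ?_)
      field_simp
      ring
    have h2id : 1 - (((a + b) * x - 2 * (a * b)) / (x * (b - a))) ^ 2
        = 4 * (a * b) * ((b - x) * (x - a)) / (x ^ 2 * (b - a) ^ 2) := by
      field_simp
      ring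
    have hg2v : (((a + b) * x - 2 * (a * b)) / (x * (b - a))) ^ 2 < 1 := by
      have : 0 < 4 * (a * b) * ((b - x) * (x - a)) / (x ^ 2 * (b - a) ^ 2) := by positivity
      nlinarith [h2id]
    have hs2 : Real.sqrt (1 - (((a + b) * x - 2 * (a * b)) / (x * (b - a))) ^ 2)
        = 2 * Real.sqrt (a * b) * Real.sqrt ((b - x) * (x - a)) / (x * (b - a)) := by
      have h2' : 1 - (((a + b) * x - 2 * (a * b)) / (x * (b - a))) ^ 2
          = (2 * Real.sqrt (a * b) * Real.sqrt ((b - x) * (x - a)) / (x * (b - a))) ^ 2 := by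
        rw [h2id, div_pow, mul_pow, mul_pow, hsqP, hsqab]
        ring
      rw [h2', Real.sqrt_sq (by positivity)]
    have hg2ne1 : (((a + b) * x - 2 * (a * b)) / (x * (b - a))) ≠ -1 := by
      intro hc; rw [hc] at hg2v; norm_num at hg2v
    have hg2ne2 : (((a + b) * x - 2 * (a * b)) / (x * (b - a))) ≠ 1 := by
      intro hc; rw [hc] at hg2v; norm_num at hg2v
    have hB : HasDerivAt (fun x : ℝ => Real.arcsin (((a + b) * x - 2 * (a * b)) / (x * (b - a))))
        (Real.sqrt (a * b) / (x * Real.sqrt ((b - x) * (x - a)))) x := by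
      have := (Real.hasDerivAt_arcsin hg2ne1 hg2ne2).comp x hg2
      refine this.congr_deriv (Eq.symm ?_)
      rw [hs2]
      rw [div_eq_iff (by positivity : x * Real.sqrt ((b - x) * (x - a)) ≠ 0)]
      have haa : Real.sqrt a * Real.sqrt a = a := Real.mul_self_sqrt ha.le
      have hbb : Real.sqrt b * Real.sqrt b = b := Real.mul_self_sqrt hb.le
      field_simp
      linear_combination hsqab
    -- combine
    have := (hC.add (hA.const_mul ((a + b) / 2))).sub (hB.const_mul (Real.sqrt (a * b)))
    refine this.congr_deriv (Eq.symm ?_)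
    rw [div_eq_iff hx0.ne']
    have haa : Real.sqrt a * Real.sqrt a = a := Real.mul_self_sqrt ha.le
    have hbb : Real.sqrt b * Real.sqrt b = b := Real.mul_self_sqrt hb.le
    have hPP : Real.sqrt ((b - x) * (x - a)) * Real.sqrt ((b - x) * (x - a)) = (b - x) * (x - a) :=
      Real.mul_self_sqrt hP.le
    field_simp
    linear_combination 2 * hPP + 2 * Real.sq_sqrt (by positivity : (0:ℝ) ≤ b * a)
  have hint : IntervalIntegrable (fun x => Real.sqrt ((b - x) * (x - a)) / x)
      MeasureTheory.volume a b := by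
    apply ContinuousOn.intervalIntegrable
    rw [uIcc_of_le hab.le]
    apply ContinuousOn.div (Real.continuous_sqrt.comp (by continuity)).continuousOn
      continuousOn_id
    intro x hx
    exact (lt_of_lt_of_le ha hx.1).ne'
  rw [intervalIntegral.integral_eq_sub_of_hasDerivAt_of_le hab.le hcont hderiv hint]
  have hFa : F a = (a + b) / 2 * (-(Real.pi / 2)) - Real.sqrt (a * b) * (-(Real.pi / 2)) := by
    rw [hF]
    have e1 : (2 * a - (a + b)) / (b - a) = -1 := by
      rw [div_eq_iff hba.ne']; ring
    have e2 : ((a + b) * a - 2 * (a * b)) / (a * (b - a)) = -1 := by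
      rw [div_eq_iff (by positivity)]; ring
    simp [e1, e2, Real.arcsin_neg_one]
  have hFb : F b = (a + b) / 2 * (Real.pi / 2) - Real.sqrt (a * b) * (Real.pi / 2) := by
    rw [hF]
    have e1 : (2 * b - (a + b)) / (b - a) = 1 := by
      rw [div_eq_iff hba.ne']; ring
    have e2 : ((a + b) * b - 2 * (a * b)) / (b * (b - a)) = 1 := by
      rw [div_eq_iff (by positivity)]; ring
    simp [e1, e2, Real.arcsin_one]
  rw [hFa, hFb]
  ring

/-- The two roots of `r² - r/β + ϖ²/2 = 0` are `r± = (1 ± e)/(2β)` with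
`e = sqrt (1 - 2ϖ²β²)`, and `2∫_{r₋}^{r₊} sqrt(-2 - ϖ²/r² + 2/(βr)) dr
  = sqrt 2 * π * (1 - sqrt (1 - e²))/β`. -/
theorem stmt_1 (β ϖ : ℝ) (hβ : 0 < β) (hϖ : 0 < ϖ) (h : 2 * ϖ ^ 2 * β ^ 2 < 1) :
    (∀ r : ℝ, r ^ 2 - r / β + ϖ ^ 2 / 2 = 0 ↔
      r = (1 - Real.sqrt (1 - 2 * ϖ ^ 2 * β ^ 2)) / (2 * β) ∨
      r = (1 + Real.sqrt (1 - 2 * ϖ ^ 2 * β ^ 2)) / (2 * β)) ∧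
    2 * ∫ r in ((1 - Real.sqrt (1 - 2 * ϖ ^ 2 * β ^ 2)) / (2 * β))..(
          (1 + Real.sqrt (1 - 2 * ϖ ^ 2 * β ^ 2)) / (2 * β)),
        Real.sqrt (-2 - ϖ ^ 2 / r ^ 2 + 2 / (β * r))
      = Real.sqrt 2 * Real.pi *
          (1 - Real.sqrt (1 - (Real.sqrt (1 - 2 * ϖ ^ 2 * β ^ 2)) ^ 2)) / β := by
  set e := Real.sqrt (1 - 2 * ϖ ^ 2 * β ^ 2) with he
  set a := (1 - e) / (2 * β) with ha'
  set b := (1 + e) / (2 * β) with hb'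
  have ht0 : 0 < 1 - 2 * ϖ ^ 2 * β ^ 2 := by linarith
  have he2 : e ^ 2 = 1 - 2 * ϖ ^ 2 * β ^ 2 := Real.sq_sqrt ht0.le
  have hepos : 0 < e := Real.sqrt_pos.mpr ht0
  have helt : e < 1 := by
    have hpp : 0 < 2 * ϖ ^ 2 * β ^ 2 := by positivity
    have := Real.sqrt_lt_sqrt ht0.le (show 1 - 2 * ϖ ^ 2 * β ^ 2 < 1 by linarith)
    rwa [Real.sqrt_one] at this
  have ha : 0 < a := by
    rw [ha']; apply div_pos (by linarith) (by positivity)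
  have hab : a < b := by
    rw [ha', hb', div_lt_div_iff₀ (by positivity) (by positivity)]
    nlinarith
  have hsum : a + b = 1 / β := by
    rw [ha', hb', ← add_div, show 1 - e + (1 + e) = (2:ℝ) by ring]
    rw [eq_div_iff hβ.ne']
    field_simp
  have hprod : a * b = ϖ ^ 2 / 2 := by
    rw [ha', hb']
    field_simp
    linear_combination (-1 : ℝ) * he2
  constructor
  · intro r
    have hq : r ^ 2 - r / β + ϖ ^ 2 / 2 = (r - a) * (r - b) := by
      linear_combination r * hsum - hprod
    rw [hq, mul_eq_zero, sub_eq_zero, sub_eq_zero]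
  · have hintg : Set.EqOn (fun r => Real.sqrt (-2 - ϖ ^ 2 / r ^ 2 + 2 / (β * r)))
        (fun r => Real.sqrt 2 * (Real.sqrt ((b - r) * (r - a)) / r)) (Set.uIcc a b) := by
      intro r hr
      rw [Set.uIcc_of_le hab.le] at hr
      have hr0 : 0 < r := lt_of_lt_of_le ha hr.1
      have hQ : 0 ≤ (b - r) * (r - a) :=
        mul_nonneg (by linarith [hr.2]) (by linarith [hr.1])
      have hexp : (b - r) * (r - a) = -r ^ 2 + r / β - ϖ ^ 2 / 2 := by
        linear_combination r * hsum - hprod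
      have hid : -2 - ϖ ^ 2 / r ^ 2 + 2 / (β * r) = 2 * ((b - r) * (r - a)) / r ^ 2 := by
        rw [hexp]
        field_simp
        ring
      simp only
      rw [hid, mul_div_assoc, Real.sqrt_mul (by norm_num : (0:ℝ) ≤ 2),
        Real.sqrt_div hQ, Real.sqrt_sq hr0.le]
    rw [intervalIntegral.integral_congr hintg, intervalIntegral.integral_const_mul,
      key_integral ha hab, hsum, hprod]
    have h1e : 1 - e ^ 2 = 2 * ϖ ^ 2 * β ^ 2 := by linarith [he2]
    rw [h1e]
    have hs2 : Real.sqrt (2 * ϖ ^ 2 * β ^ 2) = Real.sqrt 2 * ϖ * β := by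
      rw [show 2 * ϖ ^ 2 * β ^ 2 = 2 * (ϖ * β) ^ 2 by ring, Real.sqrt_mul (by norm_num),
        Real.sqrt_sq (by positivity)]
      ring
    have hsp : Real.sqrt (ϖ ^ 2 / 2) = ϖ / Real.sqrt 2 := by
      rw [Real.sqrt_div (sq_nonneg ϖ), Real.sqrt_sq hϖ.le]
    rw [hs2, hsp]
    have h22 : Real.sqrt 2 * Real.sqrt 2 = 2 := Real.mul_self_sqrt (by norm_num)
    have hs2ne : Real.sqrt 2 ≠ 0 := by positivity
    field_simp
    linear_combination (β * ϖ) * h22
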